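/- For any cooperative game (N, ν) with n players, if S is a random subset of N distributed according to the CMCS distribution, then for every player i ∈ N the expectation E[Δ'_i(S)] equals the Shapley value φ_i; in other words, the extended marginal contribution of i to a CMCS-distributed coalition is an unbiased estimator of φ_i. -/

import Mathlib

open Finset MeasureTheory

lemma cmcs_key_nat (n k : ℕ) (hk : k + 1 ≤ n) :
    (1 : ℝ) / ((n + 1) * n.choose k) + 1 / ((n + 1) * n.choose (k + 1))
      = 1 / (n * (n - 1).choose k) := by
  have hn : 1 ≤ n := le_trans (Nat.le_add_left 1 k) hk
  have ha : 0 < n.choose k := Nat.choose_pos (le_trans (Nat.le_succ k) hk)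
  have hb : 0 < n.choose (k + 1) := Nat.choose_pos hk
  have hc : 0 < (n - 1).choose k := Nat.choose_pos (by omega)
  have h1 : (n + 1) * n.choose k = (n.choose k + n.choose (k + 1)) * (k + 1) := by
    have := Nat.add_one_mul_choose_eq n k
    simpa [Nat.choose_succ_succ, Nat.succ_eq_add_one] using this
  have h2 : n * (n - 1).choose k = n.choose (k + 1) * (k + 1) := by
    have hn1 : n - 1 + 1 = n := by omega
    have := Nat.add_one_mul_choose_eq (n - 1) k
    simpa [Nat.succ_eq_add_one, hn1] using this
  have h1' : ((n : ℝ) + 1) * n.choose k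
      = ((n.choose k : ℝ) + n.choose (k + 1)) * (k + 1) := by
    exact_mod_cast congrArg (Nat.cast (R := ℝ)) h1
  have h2' : (n : ℝ) * (n - 1).choose k = (n.choose (k + 1) : ℝ) * (k + 1) := by
    exact_mod_cast congrArg (Nat.cast (R := ℝ)) h2
  have ha' : (0 : ℝ) < n.choose k := by exact_mod_cast ha
  have hb' : (0 : ℝ) < n.choose (k + 1) := by exact_mod_cast hb
  have hc' : (0 : ℝ) < (n - 1).choose k := by exact_mod_cast hc
  have hn' : (0 : ℝ) < n := by exact_mod_cast hn
  have hn1' : (0 : ℝ) < (n : ℝ) + 1 := by positivity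
  field_simp
  linear_combination ((n.choose k : ℝ) + n.choose (k + 1)) * h2'
    - (n.choose (k + 1) : ℝ) * h1'

theorem cmcs_extended_marginal_contribution_unbiased
    {ι : Type*} [Fintype ι] [DecidableEq ι]
    {Ω : Type*} [MeasurableSpace Ω] (ℙ : Measure Ω) [IsProbabilityMeasure ℙ]
    (ν : Finset ι → ℝ) (hν : ν ∅ = 0)
    (S : Ω → Finset ι)
    (hmeas : ∀ T : Finset ι, MeasurableSet {ω | S ω = T})
    (hlaw : ∀ T : Finset ι,
      ℙ {ω | S ω = T} = ENNReal.ofReal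
        (1 / (((Fintype.card ι : ℝ) + 1) * ((Fintype.card ι).choose T.card))))
    (i : ι) :
    (∫ ω, (ν (insert i (S ω)) - ν ((S ω).erase i)) ∂ℙ)
      = ∑ T ∈ (Finset.univ.erase i).powerset,
          (1 / ((Fintype.card ι : ℝ) * ((Fintype.card ι - 1).choose T.card))) *
            (ν (insert i T) - ν T) := by
  classical
  set n := Fintype.card ι with hn_def
  have hn : 1 ≤ n := Fintype.card_pos_iff.mpr ⟨i⟩
  -- Step 1: compute the integral as a finite sum over values of S
  have hint : (∫ ω, (ν (insert i (S ω)) - ν ((S ω).erase i)) ∂ℙ)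
      = ∑ T : Finset ι, (ℙ {ω | S ω = T}).toReal * (ν (insert i T) - ν (T.erase i)) := by
    have hfun : ∀ ω, ν (insert i (S ω)) - ν ((S ω).erase i)
        = ∑ T : Finset ι,
            Set.indicator {ω' | S ω' = T} (fun _ => ν (insert i T) - ν (T.erase i)) ω := by
      intro ω
      rw [Finset.sum_eq_single (S ω)]
      · simp [Set.indicator]
      · intro T _ hT
        simp only [Set.indicator, Set.mem_setOf_eq]
        rw [if_neg (fun h => hT h.symm)]
      · simp
    simp_rw [hfun]
    rw [integral_finset_sum]
    · refine Finset.sum_congr rfl fun T _ => ?_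
      rw [integral_indicator_const _ (hmeas T)]
      simp [mul_comm, measureReal_def]
    · intro T _
      exact (integrable_const _).indicator (hmeas T)
  rw [hint]
  -- Step 2: substitute the law
  have hlaw' : ∀ T : Finset ι,
      (ℙ {ω | S ω = T}).toReal = 1 / (((n : ℝ) + 1) * (n.choose T.card)) := by
    intro T
    rw [hlaw T, ENNReal.toReal_ofReal (by positivity)]
  simp_rw [hlaw']
  -- Step 3: split sum over all subsets according to whether i ∈ T
  have huniv : (Finset.univ : Finset ι) = insert i (Finset.univ.erase i) := by
    simp [Finset.insert_erase (Finset.mem_univ i)]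
  have hsum : ∑ T : Finset ι,
      (1 / (((n : ℝ) + 1) * (n.choose T.card))) * (ν (insert i T) - ν (T.erase i))
      = ∑ T ∈ (Finset.univ.erase i).powerset,
          ((1 / (((n : ℝ) + 1) * (n.choose T.card))) * (ν (insert i T) - ν (T.erase i))
          + (1 / (((n : ℝ) + 1) * (n.choose (insert i T).card)))
              * (ν (insert i (insert i T)) - ν ((insert i T).erase i))) := by
    conv_rhs => rw [Finset.sum_add_distrib, ← Finset.sum_powerset_insert
      (Finset.notMem_erase i Finset.univ), ← huniv, Finset.powerset_univ]
  rw [hsum]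
  refine Finset.sum_congr rfl fun T hT => ?_
  have hiT : i ∉ T := fun h =>
    Finset.notMem_erase i Finset.univ (Finset.mem_powerset.mp hT h)
  have hTcard : T.card + 1 ≤ n := by
    have := Finset.card_le_card (Finset.mem_powerset.mp hT)
    rw [Finset.card_erase_of_mem (Finset.mem_univ i), Finset.card_univ] at this
    omega
  rw [Finset.erase_eq_of_notMem hiT, Finset.insert_idem,
    Finset.erase_insert hiT, Finset.card_insert_of_notMem hiT]
  rw [← add_mul, cmcs_key_nat n T.card hTcard]
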